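/- Let σ be an automorphism of G(V) such that σ(⟨e_i⟩) = ⟨e_i⟩ for every 1 ≤ i ≤ n. Then there exist functions f_{ij} : F_q → F_q for all 1 ≤ i < j ≤ n, satisfying f_{ij}(a) = 0 if and only if a = 0, such that for every 1 ≤ i ≤ n and all scalars a_{i+1}, …, a_n ∈ F_q, σ(⟨e_i + ∑_{j=i+1}^n a_j e_j⟩) = ⟨e_i + ∑_{j=i+1}^n f_{ij}(a_j) e_j⟩. -/

import Mathlib

/-- The subspace sum graph: vertices are the nontrivial proper subspaces of `V`,
two distinct vertices being adjacent iff their sum is `V`. -/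
def sumGraph (F V : Type*) [Field F] [AddCommGroup V] [Module F V] :
    SimpleGraph {W : Submodule F V // W ≠ ⊥ ∧ W ≠ ⊤} where
  Adj W₁ W₂ := W₁ ≠ W₂ ∧ W₁.1 ⊔ W₂.1 = ⊤
  symm := ⟨fun a b h => ⟨h.1.symm, by rw [sup_comm]; exact h.2⟩⟩
  loopless := ⟨fun a h => h.1 rfl⟩

open Module Submodule

section Aux
variable {F V : Type*} [Field F] [AddCommGroup V] [Module F V] [FiniteDimensional F V]

lemma sumGraph_adj (W₁ W₂ : {W : Submodule F V // W ≠ ⊥ ∧ W ≠ ⊤}) :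
    (sumGraph F V).Adj W₁ W₂ ↔ W₁ ≠ W₂ ∧ W₁.1 ⊔ W₂.1 = ⊤ := Iff.rfl

lemma hyper_sup_eq_top {H W : Submodule F V} (hH : finrank F H + 1 = finrank F V)
    (hW : ¬ W ≤ H) : H ⊔ W = ⊤ := by
  have h1 : H < H ⊔ W := left_lt_sup.mpr hW
  have h2 := Submodule.finrank_lt_finrank_of_lt h1
  have h3 : finrank F ↥(H ⊔ W) ≤ finrank F V := Submodule.finrank_le _
  exact Submodule.eq_top_of_finrank_eq (by omega)

lemma line_hyper_adj {L H : Submodule F V} (hH : finrank F H + 1 = finrank F V) :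
    (L ≠ H ∧ L ⊔ H = ⊤) ↔ ¬ L ≤ H := by
  constructor
  · rintro ⟨hne, htop⟩ hle
    rw [sup_eq_right.mpr hle] at htop
    rw [htop, finrank_top] at hH
    omega
  · intro hle
    refine ⟨fun h => hle (h ▸ le_rfl), ?_⟩
    rw [sup_comm]
    exact hyper_sup_eq_top hH hle

lemma hyper_unique {S H1 H2 : Submodule F V} {x : V} (hx : x ≠ 0) (h1 : S ≤ H1) (h2 : S ≤ H2)
    (hs : S ⊔ span F {x} = ⊤) (d1 : finrank F H1 + 1 = finrank F V)
    (d2 : finrank F H2 + 1 = finrank F V) : H1 = H2 := by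
  have hsum : finrank F ↥(S ⊔ span F {x}) ≤ finrank F S + finrank F (span F {x}) :=
    Submodule.finrank_add_le_finrank_add_finrank _ _
  rw [hs, finrank_top, finrank_span_singleton hx] at hsum
  have e1 : S = H1 :=
    Submodule.eq_of_le_of_finrank_le h1 (by have := Submodule.finrank_le H1; omega)
  have e2 : S = H2 :=
    Submodule.eq_of_le_of_finrank_le h2 (by have := Submodule.finrank_le H2; omega)
  rw [← e1, e2]

lemma ker_functional_finrank {φ : V →ₗ[F] F} {x : V} (hx : φ x ≠ 0) :
    finrank F (LinearMap.ker φ) + 1 = finrank F V := by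
  have hrange : LinearMap.range φ = ⊤ := by
    rw [eq_top_iff]
    intro y _
    exact ⟨(y * (φ x)⁻¹) • x, by simp [mul_assoc, inv_mul_cancel₀ hx]⟩
  have := LinearMap.finrank_range_add_finrank_ker φ
  rw [hrange, finrank_top, finrank_self] at this
  omega

/-- the "nonempty clique neighborhood" predicate -/
def IsClq (W : {W : Submodule F V // W ≠ ⊥ ∧ W ≠ ⊤}) : Prop :=
  (∃ U, (sumGraph F V).Adj W U) ∧
    ∀ U1 U2, (sumGraph F V).Adj W U1 → (sumGraph F V).Adj W U2 → U1 ≠ U2 →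
      (sumGraph F V).Adj U1 U2

lemma exists_neighbor (W : {W : Submodule F V // W ≠ ⊥ ∧ W ≠ ⊤}) :
    ∃ U, (sumGraph F V).Adj W U := by
  obtain ⟨U, hU⟩ := Submodule.exists_isCompl W.1
  have hb : U ≠ ⊥ := by
    rintro rfl
    exact W.2.2 (by simpa using hU.codisjoint.eq_top)
  have ht : U ≠ ⊤ := by
    rintro rfl
    exact W.2.1 (by simpa using hU.disjoint.eq_bot)
  refine ⟨⟨U, hb, ht⟩, ?_, hU.codisjoint.eq_top⟩
  intro hEq
  have : W.1 = U := congrArg Subtype.val hEq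
  apply W.2.1
  have h2 : W.1 ⊓ U = ⊥ := hU.disjoint.eq_bot
  rw [← this, inf_idem] at h2
  exact h2

lemma isClq_iff (hd : 3 ≤ finrank F V) (W : {W : Submodule F V // W ≠ ⊥ ∧ W ≠ ⊤}) :
    IsClq W ↔ finrank F W.1 = 1 := by
  have hWpos : 0 < finrank F W.1 := by
    rcases Nat.eq_zero_or_pos (finrank F W.1) with h | h
    · exact absurd (Submodule.finrank_eq_zero.mp h) W.2.1
    · exact h
  have hWlt : finrank F W.1 < finrank F V :=
    Submodule.finrank_lt W.2.2
  constructor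
  · -- if the neighborhood is a nonempty clique then `W` is a line
    intro hclq
    by_contra h1
    -- `finrank W ≥ 2`; we build two neighbors that are comparable
    obtain ⟨U1, hU1⟩ := Submodule.exists_isCompl W.1
    obtain ⟨w, hwW, hw0⟩ := (Submodule.ne_bot_iff W.1).mp W.2.1
    have hwU1 : w ∉ U1 := fun hmem => hw0 (by
      have : w ∈ W.1 ⊓ U1 := ⟨hwW, hmem⟩
      rwa [hU1.disjoint.eq_bot, Submodule.mem_bot] at this)
    set U2 : Submodule F V := U1 ⊔ span F {w} with hU2def
    have hfr : finrank F U1 + finrank F W.1 = finrank F V := by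
      have := Submodule.finrank_add_eq_of_isCompl hU1
      omega
    have hU2le : finrank F U2 ≤ finrank F U1 + 1 := by
      have h := Submodule.finrank_add_le_finrank_add_finrank U1 (span F {w})
      rwa [finrank_span_singleton hw0] at h
    have hU1b : U1 ≠ ⊥ := by
      rintro rfl
      exact W.2.2 (by simpa using hU1.codisjoint.eq_top)
    have hU1t : U1 ≠ ⊤ := by
      rintro rfl
      exact W.2.1 (by simpa using hU1.disjoint.eq_bot)
    have hU2b : U2 ≠ ⊥ := by
      intro hEq
      refine hw0 ?_
      have : w ∈ U2 := Submodule.mem_sup_right (Submodule.mem_span_singleton_self w)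
      rwa [hEq, Submodule.mem_bot] at this
    have hU2t : U2 ≠ ⊤ := by
      intro hEq
      rw [hEq, finrank_top] at hU2le
      omega
    have hwU2 : w ∈ U2 := Submodule.mem_sup_right (Submodule.mem_span_singleton_self w)
    have hAdj1 : (sumGraph F V).Adj W ⟨U1, hU1b, hU1t⟩ := by
      refine ⟨?_, hU1.codisjoint.eq_top⟩
      intro hEq
      have hv : W.1 = U1 := congrArg Subtype.val hEq
      rw [hv] at hwW
      exact hwU1 hwW
    have hAdj2 : (sumGraph F V).Adj W ⟨U2, hU2b, hU2t⟩ := by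
      refine ⟨?_, ?_⟩
      · intro hEq
        have hv : W.1 = U2 := congrArg Subtype.val hEq
        have : U1 ≤ W.1 := hv ▸ le_sup_left
        have : U1 = ⊥ := by
          rw [← hU1.disjoint.eq_bot, inf_comm, inf_eq_left.mpr this]
        exact hU1b this
      · show W.1 ⊔ (U1 ⊔ span F {w}) = ⊤
        have hsw : span F {w} ≤ W.1 := Submodule.span_le.mpr (Set.singleton_subset_iff.mpr hwW)
        rw [sup_comm U1 (span F {w}), ← sup_assoc, sup_eq_left.mpr hsw]
        exact hU1.codisjoint.eq_top
    have hne : (⟨U1, hU1b, hU1t⟩ : {W : Submodule F V // W ≠ ⊥ ∧ W ≠ ⊤}) ≠ ⟨U2, hU2b, hU2t⟩ := by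
      intro hEq
      have hv : U1 = U2 := congrArg Subtype.val hEq
      rw [hv] at hwU1
      exact hwU1 hwU2
    have := (hclq.2 _ _ hAdj1 hAdj2 hne).2
    simp only [sup_eq_right.mpr (le_sup_left : U1 ≤ U2)] at this
    exact hU2t ((sup_eq_right.mpr (le_sup_left : U1 ≤ U2)).symm.trans this)
  · -- a line's neighborhood is a nonempty clique
    intro hW1
    refine ⟨exists_neighbor W, ?_⟩
    rintro U1 U2 ⟨hne1, hsup1⟩ ⟨hne2, hsup2⟩ hne
    have hyper : ∀ (U : {W : Submodule F V // W ≠ ⊥ ∧ W ≠ ⊤}), W.1 ⊔ U.1 = ⊤ →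
        finrank F U.1 + 1 = finrank F V := by
      intro U hsup
      have h1 : finrank F ↥(W.1 ⊔ U.1) ≤ finrank F W.1 + finrank F U.1 :=
        Submodule.finrank_add_le_finrank_add_finrank _ _
      rw [hsup, finrank_top, hW1] at h1
      have h2 : finrank F U.1 < finrank F V :=
        Submodule.finrank_lt U.2.2
      omega
    have d1 := hyper U1 hsup1
    have d2 := hyper U2 hsup2
    refine ⟨hne, ?_⟩
    have hnle : ¬ U2.1 ≤ U1.1 := by
      intro hle
      exact hne (Subtype.ext (Submodule.eq_of_le_of_finrank_le hle (by omega)).symm)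
    exact hyper_sup_eq_top d1 hnle

lemma isClq_map (σ : sumGraph F V ≃g sumGraph F V) (W) (h : IsClq W) : IsClq (σ W) := by
  obtain ⟨⟨U, hU⟩, hclq⟩ := h
  refine ⟨⟨σ U, σ.map_adj_iff.mpr hU⟩, ?_⟩
  intro U1 U2 h1 h2 hne
  have h1' : (sumGraph F V).Adj W (σ.symm U1) := by
    rw [← σ.map_adj_iff, RelIso.apply_symm_apply]
    exact h1
  have h2' : (sumGraph F V).Adj W (σ.symm U2) := by
    rw [← σ.map_adj_iff, RelIso.apply_symm_apply]
    exact h2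
  have hne' : σ.symm U1 ≠ σ.symm U2 := fun hEq => hne (by
    have := congrArg σ hEq
    rwa [RelIso.apply_symm_apply, RelIso.apply_symm_apply] at this)
  have := hclq _ _ h1' h2' hne'
  have h3 := σ.map_adj_iff.mpr this
  rwa [RelIso.apply_symm_apply, RelIso.apply_symm_apply] at h3

end Aux

/-- Claim 2. -/
theorem stmt_10 (F V : Type*) [Field F] [Fintype F] [AddCommGroup V] [Module F V]
    [FiniteDimensional F V] (n : ℕ) (hn : 3 ≤ n) (hdim : Module.finrank F V = n)
    (e : Basis (Fin n) F V)
    (σ : sumGraph F V ≃g sumGraph F V)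
    (hfix : ∀ (i : Fin n) (h : Submodule.span F {e i} ≠ ⊥ ∧ Submodule.span F {e i} ≠ ⊤),
      (σ ⟨Submodule.span F {e i}, h⟩).1 = Submodule.span F {e i}) :
    ∃ f : Fin n → Fin n → F → F,
      (∀ i j : Fin n, i < j → ∀ a : F, f i j a = 0 ↔ a = 0) ∧
      (∀ (i : Fin n) (a : Fin n → F)
        (h : Submodule.span F {e i + ∑ j ∈ Finset.Ioi i, a j • e j} ≠ ⊥ ∧
             Submodule.span F {e i + ∑ j ∈ Finset.Ioi i, a j • e j} ≠ ⊤),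
        (σ ⟨Submodule.span F {e i + ∑ j ∈ Finset.Ioi i, a j • e j}, h⟩).1 =
          Submodule.span F {e i + ∑ j ∈ Finset.Ioi i, f i j (a j) • e j}) := by
  classical
  have hd : 3 ≤ finrank F V := hdim ▸ hn
  -- σ preserves lines
  have hline : ∀ W, finrank F W.1 = 1 → finrank F (σ W).1 = 1 := by
    intro W hW
    exact (isClq_iff hd _).mp (isClq_map σ W ((isClq_iff hd W).mpr hW))
  -- σ of a line, concretely
  have hlineS : ∀ (W : {W : Submodule F V // W ≠ ⊥ ∧ W ≠ ⊤}), finrank F W.1 = 1 →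
      ∃ w : V, w ≠ 0 ∧ (σ W).1 = Submodule.span F {w} := by
    intro W hW
    have h1 : finrank F (σ W).1 = 1 := hline W hW
    obtain ⟨w, hwmem, hw0⟩ := (Submodule.ne_bot_iff (σ W).1).mp (σ W).2.1
    refine ⟨w, hw0, ?_⟩
    have hsub : Submodule.span F {w} ≤ (σ W).1 := Submodule.span_le.mpr (Set.singleton_subset_iff.mpr hwmem)
    refine (Submodule.eq_of_le_of_finrank_le hsub ?_).symm
    rw [h1, finrank_span_singleton hw0]
  -- σ preserves hyperplanes
  have hhyp : ∀ (H : {W : Submodule F V // W ≠ ⊥ ∧ W ≠ ⊤}), finrank F H.1 + 1 = finrank F V →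
      finrank F (σ H).1 + 1 = finrank F V := by
    intro H dH
    obtain ⟨x, -, hxH⟩ := SetLike.exists_of_lt (show H.1 < ⊤ from lt_top_iff_ne_top.mpr H.2.2)
    have hx0 : x ≠ 0 := fun h => hxH (h ▸ H.1.zero_mem)
    have hLb : Submodule.span F {x} ≠ ⊥ := by
      simp [Submodule.span_singleton_eq_bot, hx0]
    have hLt : Submodule.span F {x} ≠ ⊤ := by
      intro hEq
      have := finrank_span_singleton (K := F) hx0
      rw [hEq, finrank_top] at this
      omega
    have hAdj : (sumGraph F V).Adj ⟨Submodule.span F {x}, hLb, hLt⟩ H := by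
      refine ⟨?_, ?_⟩
      · intro hEq
        exact hxH ((congrArg Subtype.val hEq) ▸ Submodule.mem_span_singleton_self x)
      · rw [sup_comm]
        exact hyper_sup_eq_top dH (fun h => hxH (h (Submodule.mem_span_singleton_self x)))
    have hAdj' := σ.map_adj_iff.mpr hAdj
    have hL1 : finrank F (σ ⟨Submodule.span F {x}, hLb, hLt⟩).1 = 1 :=
      hline _ (finrank_span_singleton hx0)
    have h1 : finrank F ↥((σ ⟨Submodule.span F {x}, hLb, hLt⟩).1 ⊔ (σ H).1) ≤
        finrank F (σ ⟨Submodule.span F {x}, hLb, hLt⟩).1 + finrank F (σ H).1 :=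
      Submodule.finrank_add_le_finrank_add_finrank _ _
    rw [hAdj'.2, finrank_top, hL1] at h1
    have h2 : finrank F (σ H).1 < finrank F V :=
      Submodule.finrank_lt (σ H).2.2
    omega
  -- σ preserves containment of lines in hyperplanes
  have hle : ∀ (L H : {W : Submodule F V // W ≠ ⊥ ∧ W ≠ ⊤}), finrank F L.1 = 1 →
      finrank F H.1 + 1 = finrank F V → (L.1 ≤ H.1 ↔ (σ L).1 ≤ (σ H).1) := by
    intro L H hL dH
    have key : ∀ (L' H' : {W : Submodule F V // W ≠ ⊥ ∧ W ≠ ⊤}),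
        finrank F H'.1 + 1 = finrank F V →
        ((sumGraph F V).Adj L' H' ↔ ¬ L'.1 ≤ H'.1) := by
      intro L' H' dH'
      rw [sumGraph_adj, ← line_hyper_adj dH']
      constructor
      · rintro ⟨h1, h2⟩
        exact ⟨fun hv => h1 (Subtype.ext hv), h2⟩
      · rintro ⟨h1, h2⟩
        exact ⟨fun hv => h1 (congrArg Subtype.val hv), h2⟩
    rw [← not_iff_not, ← key L H dH, ← key (σ L) (σ H) (hhyp H dH), σ.map_adj_iff]
  -- σ preserves membership of basis vectors in hyperplanes
  have pe : ∀ k : Fin n, Submodule.span F {e k} ≠ ⊥ ∧ Submodule.span F {e k} ≠ ⊤ := by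
    intro k
    constructor
    · simp [Submodule.span_singleton_eq_bot, e.ne_zero k]
    · intro hEq
      have := finrank_span_singleton (K := F) (e.ne_zero k)
      rw [hEq, finrank_top] at this
      omega
  have hmem : ∀ (k : Fin n) (H : {W : Submodule F V // W ≠ ⊥ ∧ W ≠ ⊤}),
      finrank F H.1 + 1 = finrank F V → (e k ∈ H.1 ↔ e k ∈ (σ H).1) := by
    intro k H dH
    have h := hle ⟨Submodule.span F {e k}, pe k⟩ H
      (finrank_span_singleton (e.ne_zero k)) dH
    rw [hfix k] at h
    rw [← Submodule.span_singleton_le_iff_mem, ← Submodule.span_singleton_le_iff_mem]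
    exact h
  -- membership in the pencil hyperplanes
  have hHbmem : ∀ (i j : Fin n) (b : F) (x : V),
      x ∈ LinearMap.ker (b • e.coord i - e.coord j) ↔ b * e.repr x i - e.repr x j = 0 := by
    intro i j b x
    simp [LinearMap.mem_ker, LinearMap.sub_apply, LinearMap.smul_apply, Basis.coord_apply,
      smul_eq_mul]
  have dHb : ∀ (i j : Fin n) (b : F), i ≠ j →
      finrank F (LinearMap.ker (b • e.coord i - e.coord j)) + 1 = finrank F V := by
    intro i j b hij
    apply ker_functional_finrank (x := e j)
    simp [LinearMap.sub_apply, LinearMap.smul_apply, Basis.coord_apply, Basis.repr_self, Finsupp.single_apply,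
      Ne.symm hij]
  have hbase : ∀ (i j k : Fin n) (b : F), k ≠ i → k ≠ j →
      e k ∈ LinearMap.ker (b • e.coord i - e.coord j) := by
    intro i j k b hki hkj
    rw [hHbmem]
    simp [Basis.repr_self, Finsupp.single_apply, hki, hkj]
  have hei : ∀ (i j : Fin n) (b : F), i ≠ j →
      (e i ∈ LinearMap.ker (b • e.coord i - e.coord j) ↔ b = 0) := by
    intro i j b hij
    rw [hHbmem]
    simp [Basis.repr_self, Finsupp.single_apply, hij]
  have hej : ∀ (i j : Fin n) (b : F), i ≠ j →
      e j ∉ LinearMap.ker (b • e.coord i - e.coord j) := by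
    intro i j b hij hmm
    rw [hHbmem] at hmm
    simp [Basis.repr_self, Finsupp.single_apply, Ne.symm hij] at hmm
  have vHb : ∀ (i j : Fin n) (b : F), i ≠ j →
      (LinearMap.ker (b • e.coord i - e.coord j) ≠ ⊥ ∧
        LinearMap.ker (b • e.coord i - e.coord j) ≠ ⊤) := by
    intro i j b hij
    constructor
    · intro hEq
      have := dHb i j b hij
      rw [hEq, finrank_bot] at this
      omega
    · intro hEq
      exact hej i j b hij (hEq ▸ Submodule.mem_top)
  -- classification of the pencil
  have hclass : ∀ (i j : Fin n), i ≠ j → ∀ (H : Submodule F V),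
      finrank F H + 1 = finrank F V → (∀ k, k ≠ i → k ≠ j → e k ∈ H) → e j ∉ H →
      ∃ b : F, H = LinearMap.ker (b • e.coord i - e.coord j) := by
    intro i j hij H dH hk hj
    have hsup : H ⊔ Submodule.span F {e j} = ⊤ :=
      hyper_sup_eq_top dH (fun hl => hj (hl (Submodule.mem_span_singleton_self (e j))))
    have hei' : e i ∈ H ⊔ Submodule.span F {e j} := hsup.symm ▸ Submodule.mem_top
    obtain ⟨h1, hh1, z, hz, hsum⟩ := Submodule.mem_sup.mp hei'
    obtain ⟨c, rfl⟩ := Submodule.mem_span_singleton.mp hz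
    have hmemH : e i + (-c) • e j ∈ H := by
      have hEq : e i + (-c) • e j = h1 := by
        rw [← hsum]; module
      rw [hEq]; exact hh1
    have hSH : Submodule.span F (insert (e i + (-c) • e j) (e '' {k | k ≠ i ∧ k ≠ j})) ≤ H := by
      rw [Submodule.span_le]
      rintro x (rfl | ⟨k, ⟨hk1, hk2⟩, rfl⟩)
      · exact hmemH
      · exact hk k hk1 hk2
    have hSHb : Submodule.span F (insert (e i + (-c) • e j) (e '' {k | k ≠ i ∧ k ≠ j})) ≤
        LinearMap.ker ((-c) • e.coord i - e.coord j) := by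
      rw [Submodule.span_le]
      rintro x (rfl | ⟨k, ⟨hk1, hk2⟩, rfl⟩)
      · rw [SetLike.mem_coe, hHbmem]
        simp [Basis.repr_self, Finsupp.single_apply, hij, Ne.symm hij]
      · exact hbase i j k (-c) hk1 hk2
    have hStop : Submodule.span F (insert (e i + (-c) • e j) (e '' {k | k ≠ i ∧ k ≠ j})) ⊔
        Submodule.span F {e j} = ⊤ := by
      rw [eq_top_iff, ← e.span_eq, Submodule.span_le]
      rintro x ⟨k, rfl⟩
      by_cases hkj : k = j
      · subst hkj
        exact Submodule.mem_sup_right (Submodule.mem_span_singleton_self _)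
      by_cases hki : k = i
      · subst hki
        have h1' : e k + (-c) • e j ∈
            Submodule.span F (insert (e k + (-c) • e j) (e '' {m | m ≠ k ∧ m ≠ j})) :=
          Submodule.subset_span (Set.mem_insert _ _)
        have h2' : (-c) • e j ∈ Submodule.span F {e j} :=
          Submodule.smul_mem _ _ (Submodule.mem_span_singleton_self _)
        have h3' := Submodule.sub_mem _ (Submodule.mem_sup_left h1') (Submodule.mem_sup_right h2')
        simpa using h3'
      · exact Submodule.mem_sup_left
          (Submodule.subset_span (Set.mem_insert_of_mem _ ⟨k, ⟨hki, hkj⟩, rfl⟩))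
    exact ⟨-c, hyper_unique (e.ne_zero j) hSH hSHb hStop dH (dHb i j (-c) hij)⟩
  -- coordinate hyperplanes are fixed
  have dK : ∀ k : Fin n, finrank F (LinearMap.ker (e.coord k)) + 1 = finrank F V := by
    intro k
    apply ker_functional_finrank (x := e k)
    simp [Basis.coord_apply, Basis.repr_self, Finsupp.single_apply]
  have vK : ∀ k : Fin n, LinearMap.ker (e.coord k) ≠ ⊥ ∧ LinearMap.ker (e.coord k) ≠ ⊤ := by
    intro k
    constructor
    · intro hEq
      have := dK k
      rw [hEq, finrank_bot] at this
      omega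
    · intro hEq
      have HH : e k ∈ LinearMap.ker (e.coord k) := hEq ▸ Submodule.mem_top
      rw [LinearMap.mem_ker, Basis.coord_apply] at HH
      simp [Basis.repr_self, Finsupp.single_apply] at HH
  have hKbase : ∀ (k m : Fin n), m ≠ k → e m ∈ LinearMap.ker (e.coord k) := by
    intro k m hmk
    rw [LinearMap.mem_ker, Basis.coord_apply]
    simp [Basis.repr_self, Finsupp.single_apply, hmk]
  have hKfix : ∀ k : Fin n, (σ ⟨LinearMap.ker (e.coord k), vK k⟩).1 = LinearMap.ker (e.coord k) := by
    intro k
    have dH' := hhyp ⟨LinearMap.ker (e.coord k), vK k⟩ (dK k)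
    have hS1 : Submodule.span F (e '' {m | m ≠ k}) ≤ LinearMap.ker (e.coord k) := by
      rw [Submodule.span_le]
      rintro x ⟨m, hm, rfl⟩
      exact hKbase k m hm
    have hS2 : Submodule.span F (e '' {m | m ≠ k}) ≤ (σ ⟨LinearMap.ker (e.coord k), vK k⟩).1 := by
      rw [Submodule.span_le]
      rintro x ⟨m, hm, rfl⟩
      exact (hmem m ⟨LinearMap.ker (e.coord k), vK k⟩ (dK k)).mp (hKbase k m hm)
    have hStop : Submodule.span F (e '' {m | m ≠ k}) ⊔ Submodule.span F {e k} = ⊤ := by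
      rw [eq_top_iff, ← e.span_eq, Submodule.span_le]
      rintro x ⟨m, rfl⟩
      by_cases hmk : m = k
      · subst hmk
        exact Submodule.mem_sup_right (Submodule.mem_span_singleton_self _)
      · exact Submodule.mem_sup_left (Submodule.subset_span ⟨m, hmk, rfl⟩)
    exact hyper_unique (e.ne_zero k) hS2 hS1 hStop dH' (dK k)
  -- the pencils are permuted
  have hHbfix : ∀ (i j : Fin n) (hij : i ≠ j) (b : F), ∃ b' : F,
      (σ ⟨LinearMap.ker (b • e.coord i - e.coord j), vHb i j b hij⟩).1 =
        LinearMap.ker (b' • e.coord i - e.coord j) ∧ (b' = 0 ↔ b = 0) := by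
    intro i j hij b
    have dH' := hhyp ⟨LinearMap.ker (b • e.coord i - e.coord j), vHb i j b hij⟩ (dHb i j b hij)
    obtain ⟨b', hb'⟩ := hclass i j hij _ dH'
      (fun m hm1 hm2 =>
        (hmem m ⟨_, vHb i j b hij⟩ (dHb i j b hij)).mp (hbase i j m b hm1 hm2))
      (fun hmem' =>
        hej i j b hij ((hmem j ⟨_, vHb i j b hij⟩ (dHb i j b hij)).mpr hmem'))
    refine ⟨b', hb', ?_⟩
    have h1 := hmem i ⟨_, vHb i j b hij⟩ (dHb i j b hij)
    rw [hb', hei i j b hij, hei i j b' hij] at h1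
    exact h1.symm
  have key : ∀ i j : Fin n, ∀ a : F, ∃ b : F, (b = 0 ↔ a = 0) ∧
      ∀ (hv : LinearMap.ker (a • e.coord i - e.coord j) ≠ ⊥ ∧
          LinearMap.ker (a • e.coord i - e.coord j) ≠ ⊤),
        i ≠ j → (σ ⟨LinearMap.ker (a • e.coord i - e.coord j), hv⟩).1 =
          LinearMap.ker (b • e.coord i - e.coord j) := by
    intro i j a
    by_cases hij : i ≠ j
    · obtain ⟨b', h1, h2⟩ := hHbfix i j hij a
      exact ⟨b', h2, fun hv _ => h1⟩
    · exact ⟨a, Iff.rfl, fun hv hij' => absurd hij' hij⟩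
  choose f hf0 hfσ using key
  refine ⟨f, fun i j _ a => hf0 i j a, ?_⟩
  -- the main computation
  intro i a h
  have hrepr : ∀ (g : Fin n → F) (k : Fin n),
      e.repr (e i + ∑ j ∈ Finset.Ioi i, g j • e j) k
        = if k = i then 1 else if i < k then g k else 0 := by
    intro g k
    have hcalc : e.repr (e i + ∑ j ∈ Finset.Ioi i, g j • e j) k
        = (Finsupp.single i (1 : F)) k + ∑ j ∈ Finset.Ioi i, g j * (if j = k then 1 else 0) := by
      rw [map_add, e.repr_self, map_sum, Finsupp.add_apply, Finsupp.finset_sum_apply]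
      congr 1
      refine Finset.sum_congr rfl fun j _ => ?_
      rw [map_smul, Finsupp.smul_apply, e.repr_self, smul_eq_mul, Finsupp.single_apply]
    rw [hcalc, Finsupp.single_apply]
    simp only [mul_ite, mul_one, mul_zero]
    rw [Finset.sum_ite_eq']
    simp only [Finset.mem_Ioi]
    rcases eq_or_ne k i with rfl | hk
    · simp
    · simp [Ne.symm hk, hk]
  set v := e i + ∑ j ∈ Finset.Ioi i, a j • e j with hvdef
  have hv0 : v ≠ 0 := by
    intro hEq
    have h1 := hrepr a i
    rw [← hvdef, hEq] at h1
    simp at h1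
  obtain ⟨w, hw0, hLw⟩ := hlineS ⟨Submodule.span F {v}, h⟩ (finrank_span_singleton hv0)
  have hwk0 : ∀ k : Fin n, k < i → e.repr w k = 0 := by
    intro k hk
    have hvK : Submodule.span F {v} ≤ LinearMap.ker (e.coord k) := by
      rw [Submodule.span_le, Set.singleton_subset_iff, SetLike.mem_coe, LinearMap.mem_ker,
        Basis.coord_apply, hvdef]
      rw [hrepr a k]
      simp [hk.ne, not_lt_of_gt hk]
    have h2 := (hle ⟨Submodule.span F {v}, h⟩ ⟨LinearMap.ker (e.coord k), vK k⟩
      (finrank_span_singleton hv0) (dK k)).mp hvK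
    rw [hLw, hKfix k] at h2
    have hwker : w ∈ LinearMap.ker (e.coord k) :=
      h2 (Submodule.mem_span_singleton_self w)
    rwa [LinearMap.mem_ker, Basis.coord_apply] at hwker
  have hwi : e.repr w i ≠ 0 := by
    intro hEq
    have hwK : Submodule.span F {w} ≤ LinearMap.ker (e.coord i) := by
      rw [Submodule.span_le, Set.singleton_subset_iff, SetLike.mem_coe, LinearMap.mem_ker,
        Basis.coord_apply]
      exact hEq
    have h2 := (hle ⟨Submodule.span F {v}, h⟩ ⟨LinearMap.ker (e.coord i), vK i⟩
      (finrank_span_singleton hv0) (dK i)).mpr (by rw [hLw, hKfix i]; exact hwK)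
    have hvker : v ∈ LinearMap.ker (e.coord i) := h2 (Submodule.mem_span_singleton_self v)
    rw [LinearMap.mem_ker, Basis.coord_apply, hvdef, hrepr a i] at hvker
    simp at hvker
  have hwj : ∀ j : Fin n, i < j → e.repr w j = f i j (a j) * e.repr w i := by
    intro j hij
    have hijne : i ≠ j := ne_of_lt hij
    have hvH : Submodule.span F {v} ≤ LinearMap.ker (a j • e.coord i - e.coord j) := by
      rw [Submodule.span_le, Set.singleton_subset_iff, SetLike.mem_coe, hHbmem, hvdef,
        hrepr a i, hrepr a j]
      simp [hijne.symm, hij]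
    have h2 := (hle ⟨Submodule.span F {v}, h⟩
      ⟨LinearMap.ker (a j • e.coord i - e.coord j), vHb i j (a j) hijne⟩
      (finrank_span_singleton hv0) (dHb i j (a j) hijne)).mp hvH
    rw [hLw, hfσ i j (a j) (vHb i j (a j) hijne) hijne] at h2
    have h3 := h2 (Submodule.mem_span_singleton_self w)
    rw [hHbmem] at h3
    have h4 := sub_eq_zero.mp h3
    rw [← h4]
  show (σ ⟨Submodule.span F {v}, h⟩).1 = Submodule.span F (
    {e i + ∑ j ∈ Finset.Ioi i, f i j (a j) • e j})
  rw [hLw]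
  have hwv : w = e.repr w i • (e i + ∑ j ∈ Finset.Ioi i, f i j (a j) • e j) := by
    apply e.repr.injective
    ext k
    rw [map_smul, Finsupp.smul_apply, smul_eq_mul, hrepr (fun j => f i j (a j)) k]
    rcases lt_trichotomy k i with hk | rfl | hk
    · rw [hwk0 k hk]
      simp [hk.ne, not_lt_of_gt hk]
    · simp
    · rw [hwj k hk]
      simp [hk.ne', hk, mul_comm]
  rw [hwv, Submodule.span_singleton_smul_eq (isUnit_iff_ne_zero.mpr hwi) _]
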